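/- For real ν ≥ 1/2 and reals 0 < x < y, one has e^(2√x - 2√y) < L_ν(x)/L_ν(y) < e^(2√x - 2√y) · (y/x)^ν, where L_ν(x) = Σ_{m≥0} x^m / (m! · Γ(m+ν+1)). -/

import Mathlib

open Real

namespace Stmt14Aux

noncomputable def term (μ t : ℝ) (m : ℕ) : ℝ :=
  t ^ m / (m.factorial * Real.Gamma (m + μ + 1))

noncomputable def LL (μ t : ℝ) : ℝ := ∑' m : ℕ, term μ t m

lemma arg_pos {μ : ℝ} (hμ : -(1/2) ≤ μ) (m : ℕ) : 0 < (m : ℝ) + μ + 1 := by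
  have : (0:ℝ) ≤ m := Nat.cast_nonneg m
  linarith

lemma gamma_pos {μ : ℝ} (hμ : -(1/2) ≤ μ) (m : ℕ) : 0 < Real.Gamma ((m:ℝ) + μ + 1) :=
  Real.Gamma_pos_of_pos (arg_pos hμ m)

lemma den_pos {μ : ℝ} (hμ : -(1/2) ≤ μ) (m : ℕ) :
    0 < (m.factorial : ℝ) * Real.Gamma ((m:ℝ) + μ + 1) :=
  mul_pos (by exact_mod_cast m.factorial_pos) (gamma_pos hμ m)

lemma term_nonneg {μ t : ℝ} (hμ : -(1/2) ≤ μ) (ht : 0 ≤ t) (m : ℕ) : 0 ≤ term μ t m :=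
  div_nonneg (pow_nonneg ht m) (den_pos hμ m).le

lemma gamma_lb {μ : ℝ} (hμ : -(1/2) ≤ μ) (m : ℕ) :
    min (Real.Gamma (μ+1)) (Real.Gamma (μ+2)) ≤ Real.Gamma ((m:ℝ) + μ + 1) := by
  rcases Nat.eq_zero_or_pos m with h | h
  · subst h
    simpa using min_le_left (Real.Gamma (μ+1)) (Real.Gamma (μ+2))
  · have h1 : ∀ n : ℕ, 1 ≤ n → Real.Gamma (μ+2) ≤ Real.Gamma ((n:ℝ) + μ + 1) := by
      intro n hn
      induction n, hn using Nat.le_induction with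
      | base => exact le_of_eq (by rw [show ((1:ℕ):ℝ) + μ + 1 = μ + 2 by push_cast; ring])
      | succ k hk ih =>
        have hk1 : (0:ℝ) < (k:ℝ) + μ + 1 := arg_pos hμ k
        have hkk : (1:ℝ) ≤ k := by exact_mod_cast hk
        have : Real.Gamma (((k+1 : ℕ):ℝ) + μ + 1) = ((k:ℝ) + μ + 1) * Real.Gamma ((k:ℝ) + μ + 1) := by
          push_cast
          rw [show (k:ℝ) + 1 + μ + 1 = ((k:ℝ) + μ + 1) + 1 by ring,
            Real.Gamma_add_one hk1.ne']
        rw [this]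
        have hG := Real.Gamma_pos_of_pos hk1
        nlinarith [Real.Gamma_pos_of_pos (show (0:ℝ) < μ + 2 by linarith)]
    exact le_trans (min_le_right _ _) (h1 m h)

lemma summable_term {μ : ℝ} (hμ : -(1/2) ≤ μ) (t : ℝ) : Summable (term μ t) := by
  set γ := min (Real.Gamma (μ+1)) (Real.Gamma (μ+2)) with hγdef
  have hγ : 0 < γ := lt_min (Real.Gamma_pos_of_pos (by linarith))
    (Real.Gamma_pos_of_pos (by linarith))
  have hbd : ∀ m : ℕ, |term μ t m| ≤ |t| ^ m / (m.factorial) * γ⁻¹ := by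
    intro m
    have hd := den_pos hμ m
    have hf : (0:ℝ) < m.factorial := by exact_mod_cast m.factorial_pos
    rw [term, abs_div, abs_of_pos hd, abs_pow]
    calc |t|^m / ((m.factorial:ℝ) * Real.Gamma ((m:ℝ) + μ + 1))
        ≤ |t|^m / ((m.factorial:ℝ) * γ) := by
          apply div_le_div_of_nonneg_left (by positivity) (by positivity)
          exact mul_le_mul_of_nonneg_left (gamma_lb hμ m) hf.le
      _ = |t| ^ m / (m.factorial) * γ⁻¹ := by
          field_simp
  apply Summable.of_abs
  apply Summable.of_nonneg_of_le (fun m => abs_nonneg _) hbd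
  exact (Real.summable_pow_div_factorial |t|).mul_right _


lemma shift_eq {μ : ℝ} (hμ : -(1/2) ≤ μ) (t : ℝ) (m : ℕ) :
    ((m:ℝ) + 1) * term μ t (m+1) = t * term (μ+1) t m := by
  have h1 : Real.Gamma (((m+1:ℕ):ℝ) + μ + 1) = Real.Gamma ((m:ℝ) + (μ+1) + 1) := by
    push_cast; ring_nf
  have hG : (0:ℝ) < Real.Gamma ((m:ℝ) + (μ+1) + 1) := gamma_pos (by linarith) m
  have hf : (0:ℝ) < m.factorial := by exact_mod_cast m.factorial_pos
  rw [term, term, h1, Nat.factorial_succ]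
  push_cast
  field_simp
  ring

lemma summable_mul_term {μ : ℝ} (hμ : -(1/2) ≤ μ) (t : ℝ) :
    Summable (fun m : ℕ => (m:ℝ) * term μ t m) := by
  rw [← summable_nat_add_iff 1]
  have : (fun m : ℕ => ((m+1:ℕ):ℝ) * term μ t (m+1)) = fun m : ℕ => t * term (μ+1) t m := by
    funext m
    push_cast
    exact shift_eq hμ t m
  exact this ▸ (summable_term (by linarith) t).mul_left t

lemma tsum_mul_term {μ : ℝ} (hμ : -(1/2) ≤ μ) (t : ℝ) :
    ∑' m : ℕ, (m:ℝ) * term μ t m = t * LL (μ+1) t := by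
  rw [Summable.tsum_eq_zero_add (summable_mul_term hμ t)]
  have h2 : (fun m : ℕ => ((m:ℝ) + 1) * term μ t (m+1)) = fun m : ℕ => t * term (μ+1) t m := by
    funext m; exact shift_eq hμ t m
  push_cast
  rw [h2, tsum_mul_left]
  simp [LL]

lemma LL_down {μ : ℝ} (hμ : 1/2 ≤ μ) (t : ℝ) :
    LL (μ-1) t = μ * LL μ t + t * LL (μ+1) t := by
  have hμ' : -(1/2) ≤ μ := by linarith
  have hterm : ∀ m : ℕ, term (μ-1) t m = μ * term μ t m + (m:ℝ) * term μ t m := by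
    intro m
    have hmμ : (0:ℝ) < (m:ℝ) + μ := by
      have : (0:ℝ) ≤ m := Nat.cast_nonneg m; linarith
    have hrec : Real.Gamma ((m:ℝ) + μ + 1) = ((m:ℝ) + μ) * Real.Gamma ((m:ℝ) + μ) := by
      rw [show (m:ℝ) + μ + 1 = ((m:ℝ) + μ) + 1 by ring, Real.Gamma_add_one hmμ.ne']
    have h1 : Real.Gamma ((m:ℝ) + (μ-1) + 1) = Real.Gamma ((m:ℝ) + μ) := by ring_nf
    have hGμ : (0:ℝ) < Real.Gamma ((m:ℝ) + μ) := Real.Gamma_pos_of_pos hmμ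
    have hf : (0:ℝ) < m.factorial := by exact_mod_cast m.factorial_pos
    rw [term, term, h1, hrec]
    field_simp
    ring
  rw [LL, funext hterm, Summable.tsum_add ((summable_term hμ' t).mul_left μ) (summable_mul_term hμ' t),
    tsum_mul_left, tsum_mul_term hμ' t]
  rfl

lemma LL_zero (μ : ℝ) : LL μ 0 = 1 / Real.Gamma (μ + 1) := by
  rw [LL, tsum_eq_single 0]
  · simp [term]
  · intro m hm
    simp [term, zero_pow hm]

lemma LL_nonneg {μ : ℝ} (hμ : -(1/2) ≤ μ) {t : ℝ} (ht : 0 ≤ t) : 0 ≤ LL μ t :=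
  tsum_nonneg (term_nonneg hμ ht)

lemma LL_pos {μ : ℝ} (hμ : -(1/2) ≤ μ) {t : ℝ} (ht : 0 ≤ t) : 0 < LL μ t := by
  apply Summable.tsum_pos (summable_term hμ t) (term_nonneg hμ ht) 0
  have hG : 0 < Real.Gamma ((0:ℕ) + μ + 1) := gamma_pos hμ 0
  simp only [term, pow_zero, Nat.factorial_zero, Nat.cast_one, one_mul]
  positivity


noncomputable def dterm (μ : ℝ) (m : ℕ) (z : ℝ) : ℝ :=
  ((m:ℝ) * z ^ (m - 1)) / (m.factorial * Real.Gamma ((m:ℝ) + μ + 1))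

lemma dterm_succ {μ : ℝ} (hμ : -(1/2) ≤ μ) (z : ℝ) (m : ℕ) :
    dterm μ (m+1) z = term (μ+1) z m := by
  have h1 : Real.Gamma (((m+1:ℕ):ℝ) + μ + 1) = Real.Gamma ((m:ℝ) + (μ+1) + 1) := by
    push_cast; ring_nf
  have hG : (0:ℝ) < Real.Gamma ((m:ℝ) + (μ+1) + 1) := gamma_pos (by linarith) m
  have hf : (0:ℝ) < m.factorial := by exact_mod_cast m.factorial_pos
  rw [dterm, term, h1, Nat.factorial_succ, Nat.add_sub_cancel]
  push_cast
  field_simp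

lemma summable_dterm {μ : ℝ} (hμ : -(1/2) ≤ μ) (z : ℝ) :
    Summable (fun m => dterm μ m z) := by
  rw [← summable_nat_add_iff 1]
  exact (funext (fun m => (dterm_succ hμ z m).symm) : _) ▸ summable_term (by linarith : -(1/2) ≤ μ+1) z

lemma tsum_dterm {μ : ℝ} (hμ : -(1/2) ≤ μ) (z : ℝ) :
    ∑' m : ℕ, dterm μ m z = LL (μ+1) z := by
  rw [Summable.tsum_eq_zero_add (summable_dterm hμ z)]
  have h0 : dterm μ 0 z = 0 := by simp [dterm]
  rw [h0, funext (fun m => dterm_succ hμ z m), zero_add]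
  rfl

lemma hasDerivAt_LL {μ : ℝ} (hμ : -(1/2) ≤ μ) (t : ℝ) :
    HasDerivAt (fun z => LL μ z) (LL (μ+1) t) t := by
  set R : ℝ := |t| + 1 with hRdef
  have hR : 0 < R := by positivity
  have htR : t ∈ Set.Ioo (-R) R := by
    constructor <;> [nlinarith [abs_nonneg t, neg_abs_le t]; nlinarith [le_abs_self t]]
  have key := hasDerivAt_tsum_of_isPreconnected
    (u := fun m => |dterm μ m R|)
    (g := fun m z => term μ z m) (g' := fun m z => dterm μ m z)
    (t := Set.Ioo (-R) R) (y₀ := t) (y := t)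
    ?_ (isOpen_Ioo) ((convex_Ioo _ _).isPreconnected) ?_ ?_ htR ?_ htR
  · rw [tsum_dterm hμ t] at key
    exact key
  · exact (summable_dterm hμ R).abs
  · intro m z hz
    have : HasDerivAt (fun z : ℝ => z ^ m) ((m:ℝ) * z ^ (m-1)) z := hasDerivAt_pow m z
    simpa [term, dterm, div_eq_mul_inv] using
      this.div_const ((m.factorial : ℝ) * Real.Gamma ((m:ℝ) + μ + 1))
  · intro m z hz
    have hd := den_pos hμ m
    have hzR : |z| ≤ R := by
      rcases hz with ⟨h1, h2⟩
      rw [abs_le]; constructor <;> linarith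
    simp only [Real.norm_eq_abs, dterm, abs_div, abs_of_pos hd, abs_mul, Nat.abs_cast, abs_pow,
      abs_of_pos hR]
    gcongr
  · exact summable_term hμ t


lemma key_lemma {μ t : ℝ} (hμ : 1/2 ≤ μ) (ht : 0 < t) :
    Real.sqrt t * LL μ t < LL (μ-1) t := by
  have hμ1 : -(1/2) ≤ μ - 1 := by linarith
  have hμ0 : -(1/2) ≤ μ := by linarith
  set Φ : ℝ → ℝ := fun σ => Real.exp (2*σ) * (LL (μ-1) (σ^2) - σ * LL μ (σ^2)) with hΦdef
  have hΦ : ∀ σ : ℝ, HasDerivAt Φ (Real.exp (2*σ) * ((2*μ-1) * LL μ (σ^2))) σ := by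
    intro σ
    have h2 : HasDerivAt (fun σ : ℝ => σ^2) (2*σ) σ := by
      simpa using hasDerivAt_pow 2 σ
    have hA : HasDerivAt (fun σ : ℝ => LL (μ-1) (σ^2)) (LL μ (σ^2) * (2*σ)) σ := by
      have := (hasDerivAt_LL hμ1 (σ^2)).comp σ h2
      rw [show μ - 1 + 1 = μ by ring] at this
      exact this
    have hB : HasDerivAt (fun σ : ℝ => σ * LL μ (σ^2))
        (1 * LL μ (σ^2) + σ * (LL (μ+1) (σ^2) * (2*σ))) σ :=
      by have := (hasDerivAt_id σ).mul ((hasDerivAt_LL hμ0 (σ^2)).comp σ h2); exact this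
    have he : HasDerivAt (fun σ : ℝ => Real.exp (2*σ)) (Real.exp (2*σ) * 2) σ := by
      have h2' : HasDerivAt (fun σ : ℝ => 2*σ) 2 σ := by
        simpa using (hasDerivAt_id σ).const_mul (2:ℝ)
      exact (Real.hasDerivAt_exp (2*σ)).comp σ h2'
    have hcomb := he.mul (hA.sub hB)
    refine hcomb.congr_deriv (Eq.symm ?_)
    simp only [Pi.sub_apply]
    have hid := LL_down hμ (σ^2)
    linear_combination (-2*Real.exp (2*σ)) * hid
  have hdiff : Differentiable ℝ Φ := fun σ => (hΦ σ).differentiableAt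
  have hmono : Monotone Φ := by
    apply monotone_of_deriv_nonneg hdiff
    intro σ
    rw [(hΦ σ).deriv]
    exact mul_nonneg (Real.exp_pos (2*σ)).le
      (mul_nonneg (by linarith) (LL_nonneg hμ0 (sq_nonneg σ)))
  have h0 : 0 < Φ 0 := by
    have : Φ 0 = LL (μ-1) 0 := by simp [hΦdef]
    rw [this]
    exact LL_pos hμ1 le_rfl
  have h1 : Φ 0 ≤ Φ (Real.sqrt t) := hmono (Real.sqrt_nonneg t)
  have h2 : 0 < Φ (Real.sqrt t) := lt_of_lt_of_le h0 h1
  rw [hΦdef] at h2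
  simp only [Real.sq_sqrt ht.le] at h2
  have h3 := Real.exp_pos (2 * Real.sqrt t)
  nlinarith


lemma hasDerivAt_E {t : ℝ} (ht : 0 < t) :
    HasDerivAt (fun t : ℝ => Real.exp (-(2 * Real.sqrt t)))
      (Real.exp (-(2 * Real.sqrt t)) * -(Real.sqrt t)⁻¹) t := by
  have hs : (0:ℝ) < Real.sqrt t := Real.sqrt_pos.2 ht
  have h1 : HasDerivAt (fun t : ℝ => -(2 * Real.sqrt t)) (-(2 * (1 / (2 * Real.sqrt t)))) t :=
    ((Real.hasDerivAt_sqrt ht.ne').const_mul 2).neg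
  have h2 := (Real.hasDerivAt_exp _).comp t h1
  refine h2.congr_deriv ?_
  field_simp

lemma G_anti {ν x y : ℝ} (hν : 1/2 ≤ ν) (hx : 0 < x) (hxy : x < y) :
    Real.exp (-(2 * Real.sqrt y)) * LL ν y < Real.exp (-(2 * Real.sqrt x)) * LL ν x := by
  have hν0 : -(1/2) ≤ ν := by linarith
  set G : ℝ → ℝ := fun t => Real.exp (-(2 * Real.sqrt t)) * LL ν t with hGdef
  have hd : ∀ t : ℝ, 0 < t → HasDerivAt G
      (Real.exp (-(2 * Real.sqrt t)) * -(Real.sqrt t)⁻¹ * LL ν t +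
        Real.exp (-(2 * Real.sqrt t)) * LL (ν+1) t) t :=
    fun t ht => (hasDerivAt_E ht).mul (hasDerivAt_LL hν0 t)
  have hanti : StrictAntiOn G (Set.Icc x y) := by
    apply strictAntiOn_of_deriv_neg (convex_Icc x y)
    · intro t htm
      exact ((hd t (lt_of_lt_of_le hx htm.1)).continuousAt).continuousWithinAt
    · intro t htm
      rw [interior_Icc] at htm
      have ht : 0 < t := lt_trans hx htm.1
      have hs : (0:ℝ) < Real.sqrt t := Real.sqrt_pos.2 ht
      rw [(hd t ht).deriv]
      have hk := key_lemma (show 1/2 ≤ ν + 1 by linarith) ht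
      rw [show ν + 1 - 1 = ν by ring] at hk
      have he : (0:ℝ) < Real.exp (-(2 * Real.sqrt t)) := Real.exp_pos _
      have hinv : Real.sqrt t * (Real.sqrt t)⁻¹ = 1 := mul_inv_cancel₀ hs.ne'
      have hmul := mul_lt_mul_of_pos_left hk (mul_pos he (inv_pos.2 hs))
      have hre : Real.exp (-(2 * Real.sqrt t)) * (Real.sqrt t)⁻¹ * (Real.sqrt t * LL (ν+1) t) =
          Real.exp (-(2 * Real.sqrt t)) * LL (ν+1) t := by
        field_simp
      linarith [hmul, hre]
  exact hanti (Set.mem_Icc.2 ⟨le_refl x, hxy.le⟩) (Set.mem_Icc.2 ⟨hxy.le, le_refl y⟩) hxy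

lemma H_mono {ν x y : ℝ} (hν : 1/2 ≤ ν) (hx : 0 < x) (hxy : x < y) :
    x ^ ν * (Real.exp (-(2 * Real.sqrt x)) * LL ν x) <
      y ^ ν * (Real.exp (-(2 * Real.sqrt y)) * LL ν y) := by
  have hν0 : -(1/2) ≤ ν := by linarith
  set H : ℝ → ℝ := fun t => t ^ ν * (Real.exp (-(2 * Real.sqrt t)) * LL ν t) with hHdef
  have hd : ∀ t : ℝ, 0 < t → HasDerivAt H
      (ν * t ^ (ν - 1) * (Real.exp (-(2 * Real.sqrt t)) * LL ν t) +
        t ^ ν * (Real.exp (-(2 * Real.sqrt t)) * -(Real.sqrt t)⁻¹ * LL ν t +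
          Real.exp (-(2 * Real.sqrt t)) * LL (ν+1) t)) t := by
    intro t ht
    exact (Real.hasDerivAt_rpow_const (Or.inl ht.ne')).mul
      ((hasDerivAt_E ht).mul (hasDerivAt_LL hν0 t))
  have hmono : StrictMonoOn H (Set.Icc x y) := by
    apply strictMonoOn_of_deriv_pos (convex_Icc x y)
    · intro t htm
      exact ((hd t (lt_of_lt_of_le hx htm.1)).continuousAt).continuousWithinAt
    · intro t htm
      rw [interior_Icc] at htm
      have ht : 0 < t := lt_trans hx htm.1
      have hs : (0:ℝ) < Real.sqrt t := Real.sqrt_pos.2 ht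
      have hp : (0:ℝ) < t ^ (ν - 1) := Real.rpow_pos_of_pos ht _
      have he : (0:ℝ) < Real.exp (-(2 * Real.sqrt t)) := Real.exp_pos _
      rw [(hd t ht).deriv]
      have hk := key_lemma hν ht
      rw [LL_down hν t] at hk
      have hss : Real.sqrt t * Real.sqrt t = t := Real.mul_self_sqrt ht.le
      have hti : t * (Real.sqrt t)⁻¹ = Real.sqrt t := by
        rw [← hss]; field_simp; rw [Real.sqrt_sq hs.le]
      have htν : t ^ ν = t ^ (ν - 1) * t := by
        rw [← Real.rpow_add_one ht.ne' (ν - 1), sub_add_cancel]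
      have hrw : ν * t ^ (ν - 1) * (Real.exp (-(2 * Real.sqrt t)) * LL ν t) +
          t ^ ν * (Real.exp (-(2 * Real.sqrt t)) * -(Real.sqrt t)⁻¹ * LL ν t +
            Real.exp (-(2 * Real.sqrt t)) * LL (ν+1) t) =
          t ^ (ν - 1) * Real.exp (-(2 * Real.sqrt t)) *
            ((ν * LL ν t + t * LL (ν+1) t) - Real.sqrt t * LL ν t) := by
        rw [htν]
        linear_combination (-(t ^ (ν-1) * Real.exp (-(2 * Real.sqrt t)) * LL ν t)) * hti
      rw [hrw]
      exact mul_pos (mul_pos hp he) (by linarith)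
  exact hmono (Set.mem_Icc.2 ⟨le_refl x, hxy.le⟩) (Set.mem_Icc.2 ⟨hxy.le, le_refl y⟩) hxy

lemma main {ν x y : ℝ} (hν : 1/2 ≤ ν) (hx : 0 < x) (hxy : x < y) :
    Real.exp (2 * Real.sqrt x - 2 * Real.sqrt y) < LL ν x / LL ν y ∧
      LL ν x / LL ν y < Real.exp (2 * Real.sqrt x - 2 * Real.sqrt y) * (y / x) ^ ν := by
  have hy : 0 < y := lt_trans hx hxy
  have hν0 : -(1/2) ≤ ν := by linarith
  have hLx : 0 < LL ν x := LL_pos hν0 hx.le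
  have hLy : 0 < LL ν y := LL_pos hν0 hy.le
  have hexy : Real.exp (2 * Real.sqrt x - 2 * Real.sqrt y) =
      Real.exp (2 * Real.sqrt x) * Real.exp (-(2 * Real.sqrt y)) := by
    rw [← Real.exp_add]; ring_nf
  have hcancel : ∀ u : ℝ, Real.exp (2 * Real.sqrt u) * Real.exp (-(2 * Real.sqrt u)) = 1 := by
    intro u; rw [← Real.exp_add]; simp
  constructor
  · rw [lt_div_iff₀ hLy]
    have hG := G_anti hν hx hxy
    calc Real.exp (2 * Real.sqrt x - 2 * Real.sqrt y) * LL ν y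
        = Real.exp (2 * Real.sqrt x) * (Real.exp (-(2 * Real.sqrt y)) * LL ν y) := by
          rw [hexy]; ring
      _ < Real.exp (2 * Real.sqrt x) * (Real.exp (-(2 * Real.sqrt x)) * LL ν x) :=
          mul_lt_mul_of_pos_left hG (Real.exp_pos _)
      _ = LL ν x := by rw [← mul_assoc, hcancel x, one_mul]
  · rw [div_lt_iff₀ hLy]
    have hH := H_mono hν hx hxy
    have hxν : (0:ℝ) < x ^ ν := Real.rpow_pos_of_pos hx ν
    have hyν : (0:ℝ) < y ^ ν := Real.rpow_pos_of_pos hy ν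
    have hdivrpow : (y / x) ^ ν = y ^ ν / x ^ ν := Real.div_rpow hy.le hx.le ν
    calc LL ν x
        = (x ^ ν)⁻¹ * Real.exp (2 * Real.sqrt x) *
            (x ^ ν * (Real.exp (-(2 * Real.sqrt x)) * LL ν x)) := by
          have h2 : ((x ^ ν)⁻¹ * x ^ ν) = 1 := inv_mul_cancel₀ hxν.ne'
          calc LL ν x = ((x ^ ν)⁻¹ * x ^ ν) *
              ((Real.exp (2 * Real.sqrt x) * Real.exp (-(2 * Real.sqrt x))) * LL ν x) := by
                rw [h2, hcancel x]; ring
            _ = _ := by ring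
      _ < (x ^ ν)⁻¹ * Real.exp (2 * Real.sqrt x) *
            (y ^ ν * (Real.exp (-(2 * Real.sqrt y)) * LL ν y)) := by
          apply mul_lt_mul_of_pos_left hH
          positivity
      _ = Real.exp (2 * Real.sqrt x - 2 * Real.sqrt y) * (y / x) ^ ν * LL ν y := by
          rw [hexy, hdivrpow]
          field_simp

end Stmt14Aux

open Real in
theorem stmt_14 (ν x y : ℝ) (hν : 1/2 ≤ ν) (hx : 0 < x) (hxy : x < y)
    (L : ℝ → ℝ → ℝ)
    (hL : ∀ μ t : ℝ, L μ t = ∑' m : ℕ, t ^ m / (m.factorial * Real.Gamma (m + μ + 1))) :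
    Real.exp (2 * Real.sqrt x - 2 * Real.sqrt y) < L ν x / L ν y ∧
      L ν x / L ν y < Real.exp (2 * Real.sqrt x - 2 * Real.sqrt y) * (y / x) ^ ν := by
  have hLL : ∀ μ t : ℝ, L μ t = Stmt14Aux.LL μ t := by
    intro μ t
    rw [hL]
    rfl
  rw [hLL, hLL]
  exact Stmt14Aux.main hν hx hxy
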